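/- Counterexample to AGM postulate (T*3), unrevised side: for the preference default theory with ι = Fin 2 (in the language enlarged with P), form 0 = p and form 1 = ¬p, the set of accepted conclusions is exactly the set of tautologies modulo SPO: lfp(C) = {φ : L.Sentence | every model of SPO satisfies φ}; in particular p ∉ lfp(C) and ¬p ∉ lfp(C). -/

import Mathlib

open FirstOrder Language

namespace Brevis

/-- The base language with a single binary relation symbol `R`. -/
def baseLang : Language where
  Functions := fun _ => Empty
  Relations := fun n => match n with
    | 2 => Unit
    | _ => Empty

/-- The binary relation symbol `R` of `baseLang`. -/
def Rsym : baseLang.Relations 2 := Unit.unit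

/-- The base language with a binary relation symbol `R` and one 0-ary relation symbol `P`. -/
def baseLangP : Language where
  Functions := fun _ => Empty
  Relations := fun n => match n with
    | 0 => Unit
    | 2 => Unit
    | _ => Empty

/-- The binary relation symbol `R` of `baseLangP`. -/
def RsymP : baseLangP.Relations 2 := Unit.unit

/-- The 0-ary relation symbol `P` of `baseLangP`. -/
def Psym : baseLangP.Relations 0 := Unit.unit

/-- The atomic sentence `p` given by the propositional symbol `P`. -/
def pSent (ι : Type) : (baseLangP[[ι]]).Sentence :=
  Relations.formula (Sum.inl Psym) ![]

variable (L₀ : FirstOrder.Language.{0, 0}) (R : L₀.Relations 2) (ι : Type) [Fintype ι]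

/-- The atomic sentence `d < d'`, i.e. `R (c_d) (c_d')`. -/
def ltSent (d d' : ι) : (L₀[[ι]]).Sentence :=
  Relations.boundedFormula₂ (Sum.inl R) (L₀.con d).term (L₀.con d').term

/-- The theory `SPO` asserting that `R` is a strict partial order (irreflexive and transitive). -/
def spo : (L₀[[ι]]).Theory :=
  {Relations.irreflexive (Sum.inl R), Relations.transitive (Sum.inl R)}

/-- A set of sentences is consistent iff together with `SPO` it is satisfiable. -/
def Consistent (S : (L₀[[ι]]).Theory) : Prop :=
  Theory.IsSatisfiable (S ∪ spo L₀ R ι)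

open scoped Classical in
/-- The extension base `B(e)` determined by the linear order `e` on the names. -/
noncomputable def base (e : LinearOrder ι) (form : ι → (L₀[[ι]]).Sentence) :
    (L₀[[ι]]).Theory :=
  letI := e
  (Finset.univ.sort (· ≤ · : ι → ι → Prop)).foldl
    (fun B d => if Consistent L₀ R ι (B ∪ {form d}) then B ∪ {form d} else B) ∅

/-- The deductive closure (modulo `SPO`) of a set of sentences:
all sentences satisfied in every model of `S ∪ SPO`. -/
def closure (S : (L₀[[ι]]).Theory) : Set (L₀[[ι]]).Sentence :=
  {φ | (S ∪ spo L₀ R ι) ⊨ᵇ φ}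

/-- The extension `E(e)` generated by the linear order `e`. -/
noncomputable def extension (e : LinearOrder ι) (form : ι → (L₀[[ι]]).Sentence) :
    Set (L₀[[ι]]).Sentence :=
  closure L₀ R ι (base L₀ R ι e form)

/-- A strict partial order `p` on the names is compatible with `S` iff
`S ∪ SPO ∪ {d < d' | p d d'} ∪ {¬ (d < d') | ¬ p d d'}` is satisfiable. -/
def Compatible (p : ι → ι → Prop) (S : (L₀[[ι]]).Theory) : Prop :=
  Theory.IsSatisfiable
    (S ∪ spo L₀ R ι ∪ {φ | ∃ d d', p d d' ∧ φ = ltSent L₀ R ι d d'} ∪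
      {φ | ∃ d d', ¬ p d d' ∧ φ = ∼(ltSent L₀ R ι d d')})

/-- `Exts form S`: the set of extensions `E(e)` where `e` is a linear order extending some
strict partial order compatible with `S`. -/
def Exts (form : ι → (L₀[[ι]]).Sentence) (S : (L₀[[ι]]).Theory) :
    Set (Set (L₀[[ι]]).Sentence) :=
  {E | ∃ (e : LinearOrder ι) (p : ι → ι → Prop), IsStrictOrder ι p ∧
    Compatible L₀ R ι p S ∧ (∀ d d', p d d' → e.lt d d') ∧ E = extension L₀ R ι e form}

/-- The operator `C`. -/
def C (form : ι → (L₀[[ι]]).Sentence) (S : (L₀[[ι]]).Theory) : (L₀[[ι]]).Theory :=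
  ⋂₀ Exts L₀ R ι form S

/-- The least fixed point of `C` (Knaster–Tarski): the set of accepted conclusions. -/
def lfpC (form : ι → (L₀[[ι]]).Sentence) : (L₀[[ι]]).Theory :=
  sInf {S | C L₀ R ι form S ⊆ S}


-- ===== auxiliary development =====
section Aux

/-- Structure on `Unit` with `R` empty and `P` interpreted as `b`. -/
def str (b : Prop) : (baseLangP[[Fin 2]]).Structure Unit where
  funMap := fun _ _ => Unit.unit
  RelMap := fun {n} r _ => match n, r with
    | 0, Sum.inl _ => b
    | _, _ => False

lemma str_model_spo (b : Prop) :
    @Theory.Model (baseLangP[[Fin 2]]) Unit (str b) (spo baseLangP RsymP (Fin 2)) := by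
  letI := str b
  rw [Theory.model_iff]
  intro φ hφ
  rcases hφ with h | h
  · rw [h]
    exact Relations.realize_irreflexive.2 ⟨fun x h => h⟩
  · rw [Set.mem_singleton_iff.1 h]
    exact Relations.realize_transitive.2 ⟨fun x y z h _ => h.elim⟩

lemma str_realize_pSent (b : Prop) :
    @Sentence.Realize (baseLangP[[Fin 2]]) Unit (str b) (pSent (Fin 2)) ↔ b :=
  Iff.rfl

lemma str_not_realize_ltSent (b : Prop) (d d' : Fin 2) :
    ¬ @Sentence.Realize (baseLangP[[Fin 2]]) Unit (str b)
      (ltSent baseLangP RsymP (Fin 2) d d') :=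
  fun h => h


/-- Bundled model on `Unit`. -/
def mdl (b : Prop) (T : (baseLangP[[Fin 2]]).Theory)
    (h : @Theory.Model (baseLangP[[Fin 2]]) Unit (str b) T) : T.ModelType :=
  @Theory.ModelType.mk _ _ Unit (str b) h ⟨()⟩

lemma str_model_empty (b : Prop) :
    @Theory.Model (baseLangP[[Fin 2]]) Unit (str b)
      ((∅ : (baseLangP[[Fin 2]]).Theory) ∪ spo baseLangP RsymP (Fin 2)) := by
  rw [Set.empty_union]; exact str_model_spo b

lemma str_model_closure_empty (b : Prop) :
    @Theory.Model (baseLangP[[Fin 2]]) Unit (str b)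
      (closure baseLangP RsymP (Fin 2) ∅) := by
  letI := str b
  rw [Theory.model_iff]
  intro φ hφ
  exact hφ (mdl b _ (str_model_empty b)) default default

lemma consistent_single (b : Prop) (ψ : (baseLangP[[Fin 2]]).Sentence)
    (hψ : @Sentence.Realize (baseLangP[[Fin 2]]) Unit (str b) ψ) :
    Consistent baseLangP RsymP (Fin 2) {ψ} := by
  refine ⟨mdl b _ ?_⟩
  letI := str b
  rw [Theory.model_iff]
  intro φ hφ
  rcases hφ with h | h
  · rwa [Set.mem_singleton_iff.1 h]
  · exact (Theory.model_iff _).1 (str_model_spo b) φ h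

lemma inconsistent_pair :
    ¬ Consistent baseLangP RsymP (Fin 2)
      ({pSent (Fin 2)} ∪ {∼(pSent (Fin 2))}) := by
  rintro ⟨M⟩
  have h1 : M ⊨ pSent (Fin 2) :=
    M.is_model.realize_of_mem _ (Set.mem_union_left _ (Set.mem_union_left _ rfl))
  have h2 : M ⊨ ∼(pSent (Fin 2)) :=
    M.is_model.realize_of_mem _
      (Set.mem_union_left _ (Set.mem_union_right _ rfl))
  exact (Sentence.realize_not _).1 h2 h1


lemma sort_pair (κ : Type) [Fintype κ] (e : LinearOrder κ) (a b : κ)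
    (hab : (letI := e; a ≤ b))
    (huniv : (Finset.univ : Finset κ).val = (↑[a, b] : Multiset κ)) :
    (letI := e; Finset.univ.sort (· ≤ · : κ → κ → Prop)) = [a, b] := by
  letI := e
  refine (fun hp hs => List.Perm.eq_of_pairwise' (Finset.pairwise_sort _ _) hs hp) ?_ ?_
  · exact Multiset.coe_eq_coe.1 (by rw [Finset.sort_eq]; exact huniv)
  · simp [List.Pairwise, List.pairwise_cons, hab]

lemma base_pair (L₀ : FirstOrder.Language.{0,0}) (R : L₀.Relations 2) (κ : Type) [Fintype κ]
    (e : LinearOrder κ) (form : κ → (L₀[[κ]]).Sentence) (a b : κ)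
    (hab : (letI := e; a ≤ b))
    (huniv : (Finset.univ : Finset κ).val = (↑[a, b] : Multiset κ))
    (h1 : Consistent L₀ R κ {form a})
    (h2 : ¬ Consistent L₀ R κ ({form a} ∪ {form b})) :
    base L₀ R κ e form = {form a} := by
  unfold base
  rw [sort_pair κ e a b hab huniv]
  simp only [List.foldl]
  have h1' : Consistent L₀ R κ (∅ ∪ {form a}) := by rwa [Set.empty_union]
  have h2' : ¬ Consistent L₀ R κ ((∅ ∪ {form a}) ∪ {form b}) := by
    rwa [Set.empty_union]
  simp only [if_pos h1', if_pos h1, if_neg h2', if_neg h2, Set.empty_union]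
  classical
  have hi : (if Consistent L₀ R κ (∅ ∪ {form a}) then (∅ : (L₀[[κ]]).Theory) ∪ {form a} else ∅)
      = (∅ : (L₀[[κ]]).Theory) ∪ {form a} := by
    rw [if_pos h1']
  simp only [hi, if_neg h2']

def e₂ : LinearOrder (Fin 2) := inferInstanceAs (LinearOrder (Fin 2)ᵒᵈ)

lemma univ_val_fin2 (a b : Fin 2) (hne : a ≠ b) :
    (Finset.univ : Finset (Fin 2)).val = (↑[a, b] : Multiset (Fin 2)) :=
  (by decide : ∀ a b : Fin 2, a ≠ b →
    (Finset.univ : Finset (Fin 2)).val = (↑[a, b] : Multiset (Fin 2))) a b hne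


/-- Abbreviation for the default theory of the counterexample. -/
noncomputable def form₀ : Fin 2 → (baseLangP[[Fin 2]]).Sentence :=
  ![pSent (Fin 2), ∼(pSent (Fin 2))]

def e₁ : LinearOrder (Fin 2) := inferInstance

lemma consistent_p : Consistent baseLangP RsymP (Fin 2) {pSent (Fin 2)} :=
  consistent_single True (pSent (Fin 2)) ((str_realize_pSent True).2 trivial)

lemma consistent_np : Consistent baseLangP RsymP (Fin 2) {∼(pSent (Fin 2))} :=
  consistent_single False (∼(pSent (Fin 2)))
    (fun hp => (str_realize_pSent False).1 hp)

lemma inconsistent_pair' :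
    ¬ Consistent baseLangP RsymP (Fin 2)
      ({∼(pSent (Fin 2))} ∪ {pSent (Fin 2)}) := by
  intro hc
  apply inconsistent_pair
  refine hc.mono ?_
  intro x hx
  rcases hx with (hx | hx) | hx
  · exact Or.inl (Or.inr hx)
  · exact Or.inl (Or.inl hx)
  · exact Or.inr hx

lemma base_e₁ : base baseLangP RsymP (Fin 2) e₁ form₀ = {pSent (Fin 2)} :=
  base_pair baseLangP RsymP (Fin 2) e₁ form₀ 0 1
    (show (0 : Fin 2) ≤ 1 by decide) (univ_val_fin2 0 1 (by decide))
    consistent_p inconsistent_pair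

lemma base_e₂ : base baseLangP RsymP (Fin 2) e₂ form₀ = {∼(pSent (Fin 2))} :=
  base_pair baseLangP RsymP (Fin 2) e₂ form₀ 1 0
    (show (0 : Fin 2) ≤ 1 by decide) (univ_val_fin2 1 0 (by decide))
    consistent_np inconsistent_pair'

lemma compat_false :
    Compatible baseLangP RsymP (Fin 2) (fun _ _ => False)
      (closure baseLangP RsymP (Fin 2) ∅) := by
  refine ⟨mdl True _ ?_⟩
  letI := str True
  rw [Theory.model_iff]
  intro φ hφ
  rcases hφ with ((hφ | hφ) | hφ) | hφ
  · exact (Theory.model_iff _).1 (str_model_closure_empty True) φ hφ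
  · exact (Theory.model_iff _).1 (str_model_spo True) φ hφ
  · rcases hφ with ⟨d, d', hf, _⟩
    exact hf.elim
  · rcases hφ with ⟨d, d', -, rfl⟩
    exact (Sentence.realize_not _).2 (str_not_realize_ltSent True d d')

lemma ext_mem (e : LinearOrder (Fin 2)) :
    extension baseLangP RsymP (Fin 2) e form₀ ∈
      Exts baseLangP RsymP (Fin 2) form₀ (closure baseLangP RsymP (Fin 2) ∅) :=
  ⟨e, fun _ _ => False,
    @IsStrictOrder.mk _ _ ⟨fun _ h => h⟩ ⟨fun _ _ _ h _ => h.elim⟩, compat_false,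
    fun _ _ h => h.elim, rfl⟩

lemma closure_empty_subset (S : (baseLangP[[Fin 2]]).Theory) :
    closure baseLangP RsymP (Fin 2) ∅ ⊆ closure baseLangP RsymP (Fin 2) S := by
  intro φ hφ M v xs
  exact hφ (M.subtheoryModel (Set.union_subset_union_left _ (Set.empty_subset S))) v xs

lemma mem_closure_empty_of (φ : (baseLangP[[Fin 2]]).Sentence)
    (h1 : φ ∈ closure baseLangP RsymP (Fin 2) {pSent (Fin 2)})
    (h2 : φ ∈ closure baseLangP RsymP (Fin 2) {∼(pSent (Fin 2))}) :
    φ ∈ closure baseLangP RsymP (Fin 2) ∅ := by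
  intro M v xs
  have hspo : M ⊨ spo baseLangP RsymP (Fin 2) :=
    M.is_model.mono Set.subset_union_right
  by_cases hb : M ⊨ pSent (Fin 2)
  · have hm : (M : Type) ⊨ ({pSent (Fin 2)} ∪ spo baseLangP RsymP (Fin 2)) := by
      rw [Theory.model_iff]
      intro ψ hψ
      rcases hψ with hψ | hψ
      · rwa [Set.mem_singleton_iff.1 hψ]
      · exact hspo.realize_of_mem ψ hψ
    exact h1 (@Theory.ModelType.mk _ _ M inferInstance hm inferInstance) v xs
  · have hm : (M : Type) ⊨ ({∼(pSent (Fin 2))} ∪ spo baseLangP RsymP (Fin 2)) := by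
      rw [Theory.model_iff]
      intro ψ hψ
      rcases hψ with hψ | hψ
      · rw [Set.mem_singleton_iff.1 hψ]
        exact (Sentence.realize_not _).2 hb
      · exact hspo.realize_of_mem ψ hψ
    exact h2 (@Theory.ModelType.mk _ _ M inferInstance hm inferInstance) v xs

lemma pSent_not_mem_closure_empty :
    pSent (Fin 2) ∉ closure baseLangP RsymP (Fin 2) ∅ := by
  intro h
  exact (str_realize_pSent False).1 (h (mdl False _ (str_model_empty False)) default default)

lemma not_pSent_not_mem_closure_empty :
    ∼(pSent (Fin 2)) ∉ closure baseLangP RsymP (Fin 2) ∅ := by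
  intro h
  have := h (mdl True _ (str_model_empty True)) default default
  exact this ((str_realize_pSent True).2 trivial)

lemma lfpC_eq : lfpC baseLangP RsymP (Fin 2) form₀ = closure baseLangP RsymP (Fin 2) ∅ := by
  apply le_antisymm
  · -- lfpC ≤ closure ∅ : closure ∅ is a prefixed point
    apply sInf_le
    intro φ hφ
    apply mem_closure_empty_of φ
    · have := hφ _ (ext_mem e₁)
      rwa [extension, base_e₁] at this
    · have := hφ _ (ext_mem e₂)
      rwa [extension, base_e₂] at this
  · -- closure ∅ ≤ lfpC
    apply le_sInf
    intro S hS
    refine le_trans ?_ hS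
    intro φ hφ E hE
    rcases hE with ⟨e, p, _, _, _, rfl⟩
    exact closure_empty_subset _ hφ

end Aux
theorem counterexample_T3_unrevised :
    lfpC baseLangP RsymP (Fin 2) ![pSent (Fin 2), ∼(pSent (Fin 2))] =
        closure baseLangP RsymP (Fin 2) ∅ ∧
    pSent (Fin 2) ∉ lfpC baseLangP RsymP (Fin 2) ![pSent (Fin 2), ∼(pSent (Fin 2))] ∧
    ∼(pSent (Fin 2)) ∉ lfpC baseLangP RsymP (Fin 2) ![pSent (Fin 2), ∼(pSent (Fin 2))] := by
  have he : lfpC baseLangP RsymP (Fin 2) ![pSent (Fin 2), ∼(pSent (Fin 2))] =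
      closure baseLangP RsymP (Fin 2) ∅ := lfpC_eq
  refine ⟨he, ?_, ?_⟩
  · rw [he]; exact pSent_not_mem_closure_empty
  · rw [he]; exact not_pSent_not_mem_closure_empty

end Brevis
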